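/- arXiv:1807.03088 — 2 statements merged into one kernel-verified Lean document; each statement's English description precedes it below -/
import Mathlib

section
/- If a ∈ p·D_k^{(p)} = {p·x mod p² : x ∈ D_k^{(p)}}, then H_b^{(p²)}(β^a) = Σ_{t ∈ H_b^{(p²)}} β^{a·t} equals ε + H_{(b+k) mod f}^{(p)}(β), where ε ∈ F₂ ⊆ K is the image of (p−1)/2 in F₂ (ε = 1 if p ≡ 3 (mod 4), ε = 0 if p ≡ 1 (mod 4)). -/
open Finset Polynomial

/-- Generalized cyclotomic class `D_i^{(p)} = {g^(f·t+i) mod p : 0 ≤ t < e}`. -/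
def Dp (p e f g i : ℕ) : Finset ℕ :=
  (Finset.range e).image fun t => g ^ (f * t + i) % p

/-- Generalized cyclotomic class `D_i^{(p²)} = {g^(p·f·t+i) mod p² : 0 ≤ t < e}`. -/
def Dp2 (p e f g i : ℕ) : Finset ℕ :=
  (Finset.range e).image fun t => g ^ (p * f * t + i) % p ^ 2

/-- `p·D_i^{(p)} = {p·x mod p² : x ∈ D_i^{(p)}} ⊆ Z_{p²}`. -/
def pDp (p e f g i : ℕ) : Finset ℕ :=
  (Dp p e f g i).image fun x => p * x % p ^ 2

/-- `H_b^{(p)} = ⋃_{i=0}^{f/2-1} p·D_{(i+b) mod f}^{(p)}`. -/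
def Hp (p e f g b : ℕ) : Finset ℕ :=
  (Finset.range (f / 2)).biUnion fun i => pDp p e f g ((i + b) % f)

/-- `H_b^{(p²)} = ⋃_{i=0}^{pf/2-1} D_{(i+b) mod pf}^{(p²)}`. -/
def Hp2 (p e f g b : ℕ) : Finset ℕ :=
  (Finset.range (p * f / 2)).biUnion fun i => Dp2 p e f g ((i + b) % (p * f))

/-- The characteristic set `C₁ = H_b^{(p)} ∪ H_b^{(p²)} ∪ {0}`. -/
def C1 (p e f g b : ℕ) : Finset ℕ :=
  Hp p e f g b ∪ Hp2 p e f g b ∪ {0}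


lemma sum_range_shift {M : Type*} [AddCommMonoid M] (e : ℕ) (he : 0 < e) (c : ℕ) (h : ℕ → M) :
    ∑ t ∈ Finset.range e, h ((t + c) % e) = ∑ t ∈ Finset.range e, h t := by
  haveI : NeZero e := ⟨he.ne'⟩
  rw [← Fin.sum_univ_eq_sum_range (fun t => h ((t + c) % e)) e,
      ← Fin.sum_univ_eq_sum_range h e,
      ← Equiv.sum_comp (Equiv.addRight (⟨c % e, Nat.mod_lt _ he⟩ : Fin e)) (fun t : Fin e => h t.val)]
  refine Finset.sum_congr rfl fun t _ => ?_
  simp only [Equiv.coe_addRight, Fin.val_add, Fin.val_mk, Nat.add_mod_mod]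

lemma ord_g_mod_p (p g : ℕ) (hp : p.Prime)
    (hg : orderOf (g : ZMod (p ^ 2)) = p * (p - 1)) :
    orderOf (g : ZMod p) = p - 1 := by
  haveI : Fact p.Prime := ⟨hp⟩
  have hp1 : 0 < p - 1 := Nat.sub_pos_of_lt hp.one_lt
  have hfin : IsOfFinOrder (g : ZMod (p ^ 2)) := by
    rw [← orderOf_pos_iff, hg]
    exact Nat.mul_pos hp.pos hp1
  have hu2 : IsUnit (g : ZMod (p ^ 2)) := hfin.isUnit
  have hu : IsUnit (g : ZMod p) := by
    have := hu2.map (ZMod.castHom (dvd_pow_self p two_ne_zero) (ZMod p))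
    simpa using this
  have hne : (g : ZMod p) ≠ 0 := hu.ne_zero
  set m := orderOf (g : ZMod p) with hm
  have h1 : m ∣ p - 1 := orderOf_dvd_of_pow_eq_one (ZMod.pow_card_sub_one_eq_one hne)
  -- g^m ≡ 1 mod p
  have hgm : ((g : ℤ) ^ m - 1 : ℤ) % p = 0 := by
    have : ((g : ZMod p)) ^ m = 1 := pow_orderOf_eq_one _
    have : (((g : ℤ) ^ m - 1 : ℤ) : ZMod p) = 0 := by push_cast; rw [this]; ring
    rwa [ZMod.intCast_zmod_eq_zero_iff_dvd, Int.dvd_iff_emod_eq_zero] at this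
  have hdvd : ((p : ℤ) ^ 2) ∣ (g : ℤ) ^ (m * p) - 1 := by
    have h2 : (p : ℤ) ∣ (g : ℤ) ^ m - 1 := Int.dvd_of_emod_eq_zero hgm
    have := dvd_sub_pow_of_dvd_sub h2 1
    simpa [pow_succ, ← pow_mul, mul_comm] using this
  have h3 : p * (p - 1) ∣ m * p := by
    rw [← hg]
    apply orderOf_dvd_of_pow_eq_one
    have : (((g : ℤ) ^ (m * p) - 1 : ℤ) : ZMod (p ^ 2)) = 0 := by
      rw [ZMod.intCast_zmod_eq_zero_iff_dvd]
      exact_mod_cast hdvd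
    push_cast at this
    linear_combination this
  have h4 : p - 1 ∣ m := by
    have : p * (p - 1) ∣ p * m := by rwa [mul_comm m p] at h3
    exact (mul_dvd_mul_iff_left hp.pos.ne').mp this
  exact Nat.dvd_antisymm h1 h4


lemma pow_mod_eq_pow_mod_iff (n N g : ℕ) (hu : IsUnit (g : ZMod n))
    (hord : orderOf (g : ZMod n) = N) (E E' : ℕ) :
    g ^ E % n = g ^ E' % n ↔ E % N = E' % N := by
  have hordu : orderOf hu.unit = N := by rw [← orderOf_units, hu.unit_spec]; exact hord
  have hcast : ∀ X : ℕ, ((g ^ X : ℕ) : ZMod n) = (hu.unit : ZMod n) ^ X := by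
    intro X; push_cast [hu.unit_spec]; ring
  constructor
  · intro h
    have h1 : ((g ^ E : ℕ) : ZMod n) = ((g ^ E' : ℕ) : ZMod n) :=
      (ZMod.natCast_eq_natCast_iff _ _ _).mpr h
    rw [hcast, hcast] at h1
    have h2 : hu.unit ^ E = hu.unit ^ E' := Units.ext (by push_cast; exact h1)
    have := pow_eq_pow_iff_modEq.mp h2
    rwa [hordu] at this
  · intro h
    have h2 : hu.unit ^ E = hu.unit ^ E' := by
      apply pow_eq_pow_iff_modEq.mpr
      rwa [hordu]
    have h1 : ((g ^ E : ℕ) : ZMod n) = ((g ^ E' : ℕ) : ZMod n) := by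
      rw [hcast, hcast]
      exact_mod_cast congrArg Units.val h2
    exact (ZMod.natCast_eq_natCast_iff _ _ _).mp h1

theorem stmt_8 (p e f r g : ℕ) (hp : p.Prime) (hodd : Odd p)
    (hr : 1 ≤ r) (hf : f = 2 ^ r) (hef : p - 1 = e * f)
    (hg : orderOf (g : ZMod (p ^ 2)) = p * (p - 1))
    {K : Type*} [Field K] (hK : CharP K 2) (β : K) (hβ : orderOf β = p ^ 2)
    (b k a : ℕ) (ha : a ∈ pDp p e f g k) :
    ∑ t ∈ Hp2 p e f g b, β ^ (a * t) =
      (((p - 1) / 2 : ℕ) : K) + ∑ t ∈ Hp p e f g ((b + k) % f), β ^ t := by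
  haveI : Fact p.Prime := ⟨hp⟩
  haveI := hK
  have hp1 : 1 < p := hp.one_lt
  have hfpos : 0 < f := by rw [hf]; positivity
  have hefpos : 0 < e * f := by omega
  have hepos : 0 < e := by
    rcases Nat.eq_zero_or_pos e with h | h
    · rw [h, zero_mul] at hefpos; omega
    · exact h
  have hpe : p = e * f + 1 := by omega
  -- units and orders
  have hfin : IsOfFinOrder (g : ZMod (p ^ 2)) := by
    rw [← orderOf_pos_iff, hg]
    exact Nat.mul_pos hp.pos (by omega)
  have hu2 : IsUnit (g : ZMod (p ^ 2)) := hfin.isUnit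
  have hup : IsUnit (g : ZMod p) := by
    have := hu2.map (ZMod.castHom (dvd_pow_self p two_ne_zero) (ZMod p))
    simpa using this
  have hordp : orderOf (g : ZMod p) = e * f := by
    rw [ord_g_mod_p p g hp hg]; omega
  have hord2 : orderOf (g : ZMod (p ^ 2)) = p * (e * f) := by rw [hg, hef]
  have hiffp : ∀ E E' : ℕ, g ^ E % p = g ^ E' % p ↔ E % (e * f) = E' % (e * f) :=
    pow_mod_eq_pow_mod_iff p (e * f) g hup hordp
  have hiff2 : ∀ E E' : ℕ, g ^ E % p ^ 2 = g ^ E' % p ^ 2 ↔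
      E % (p * (e * f)) = E' % (p * (e * f)) :=
    pow_mod_eq_pow_mod_iff (p ^ 2) (p * (e * f)) g hu2 hord2
  -- β exponent arithmetic
  have hβ1 : β ^ p ^ 2 = 1 := by rw [← hβ]; exact pow_orderOf_eq_one β
  have βmod : ∀ X : ℕ, β ^ X = β ^ (X % p ^ 2) := by
    intro X
    conv_lhs => rw [← Nat.div_add_mod X (p ^ 2)]
    rw [pow_add, pow_mul, hβ1, one_pow, one_mul]
  have βcongr : ∀ X Y : ℕ, X % p ^ 2 = Y % p ^ 2 → β ^ X = β ^ Y := by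
    intro X Y h; rw [βmod X, βmod Y, h]
  set F : ℕ → K := fun E => β ^ (p * (g ^ E % p)) with hF
  set V : ℕ → K := fun j => ∑ t ∈ Finset.range e, F (f * t + j) with hV
  have hFcong : ∀ E E' : ℕ, E % (e * f) = E' % (e * f) → F E = F E' := by
    intro E E' h
    simp only [hF]
    rw [(hiffp E E').mpr h]
  -- V is f-periodic
  have hVshift : ∀ x c : ℕ, V (x + f * c) = V x := by
    intro x c
    have key : ∀ t : ℕ, F (f * t + (x + f * c)) = F (f * ((t + c) % e) + x) := by
      intro t
      apply hFcong
      have h1 : f * ((t + c) % e) ≡ f * (t + c) [MOD f * e] :=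
        (Nat.mod_modEq (t + c) e).mul_left' f
      have h2 : f * (t + c) + x ≡ f * ((t + c) % e) + x [MOD e * f] := by
        rw [mul_comm e f]
        exact (h1.symm).add_right x
      have h3 : f * t + (x + f * c) = f * (t + c) + x := by ring
      rw [h3]
      exact h2
    simp only [hV]
    calc ∑ t ∈ Finset.range e, F (f * t + (x + f * c))
        = ∑ t ∈ Finset.range e, (fun u => F (f * u + x)) ((t + c) % e) := by
          exact Finset.sum_congr rfl fun t _ => key t
      _ = ∑ t ∈ Finset.range e, F (f * t + x) :=
          sum_range_shift e hepos c (fun u => F (f * u + x))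
  have hVcong : ∀ j j' : ℕ, j % f = j' % f → V j = V j' := by
    intro j j' h
    have e1 : V j = V (j % f) := by
      conv_lhs => rw [← Nat.mod_add_div j f, mul_comm f (j / f)]
      rw [show j % f + j / f * f = j % f + f * (j / f) by ring, hVshift]
    have e2 : V j' = V (j' % f) := by
      conv_lhs => rw [← Nat.mod_add_div j' f]
      rw [show j' % f + f * (j' / f) = j' % f + f * (j' / f) from rfl, hVshift]
    rw [e1, e2, h]
  -- extract s from ha
  obtain ⟨x0, hx0, hax⟩ := Finset.mem_image.mp ha
  obtain ⟨s, hs, hxs⟩ := Finset.mem_image.mp hx0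
  rw [Finset.mem_range] at hs
  have hxlt : x0 < p := by rw [← hxs]; exact Nat.mod_lt _ hp.pos
  have haval : a = p * (g ^ (f * s + k) % p) := by
    rw [← hax, Nat.mod_eq_of_lt, hxs]
    calc p * x0 < p * p := by exact Nat.mul_lt_mul_left hp.pos |>.mpr hxlt
      _ = p ^ 2 := (sq p).symm
  -- relate Dp2 sums to V
  have hS2 : ∀ i : ℕ, ∑ t ∈ Dp2 p e f g i, β ^ (a * t) = V (i + k + f * s) := by
    intro i
    rw [Dp2, Finset.sum_image]
    · simp only [hV]
      apply Finset.sum_congr rfl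
      intro t ht
      have e1 : a * (g ^ (p * f * t + i) % p ^ 2) ≡
          p * g ^ ((f * s + k) + (p * f * t + i)) [MOD p ^ 2] := by
        rw [haval]
        have m1 : p * (g ^ (f * s + k) % p) ≡ p * g ^ (f * s + k) [MOD p ^ 2] := by
          have := (Nat.mod_modEq (g ^ (f * s + k)) p).mul_left' p
          rwa [← sq] at this
        have m2 : (g ^ (p * f * t + i) % p ^ 2) ≡ g ^ (p * f * t + i) [MOD p ^ 2] :=
          Nat.mod_modEq _ _
        calc p * (g ^ (f * s + k) % p) * (g ^ (p * f * t + i) % p ^ 2)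
            ≡ p * g ^ (f * s + k) * g ^ (p * f * t + i) [MOD p ^ 2] := m1.mul m2
          _ = p * g ^ ((f * s + k) + (p * f * t + i)) := by rw [pow_add]; ring
      have e2 : p * g ^ ((f * s + k) + (p * f * t + i)) ≡
          p * (g ^ ((f * s + k) + (p * f * t + i)) % p) [MOD p ^ 2] := by
        have := (Nat.mod_modEq (g ^ ((f * s + k) + (p * f * t + i))) p).mul_left' p
        rw [← sq] at this
        exact this.symm
      have step1 : β ^ (a * (g ^ (p * f * t + i) % p ^ 2)) =
          F ((f * s + k) + (p * f * t + i)) := by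
        simp only [hF]
        exact βcongr _ _ (e1.trans e2)
      rw [step1]
      apply hFcong
      have : (f * s + k) + (p * f * t + i) = (f * t + (i + k + f * s)) + (e * f) * (f * t) := by
        rw [hpe]; ring
      rw [this, Nat.add_mul_mod_self_left]
    · intro t ht t' ht' hEq
      simp only [Finset.coe_range, Set.mem_Iio] at ht ht'
      beta_reduce at hEq
      rw [hiff2] at hEq
      have hEq' : p * f * t + i ≡ p * f * t' + i [MOD p * (e * f)] := hEq
      have h2 := hEq'.add_right_cancel' i
      have h3 : (p * f) * t % ((p * f) * e) = (p * f) * t' % ((p * f) * e) := by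
        have : p * (e * f) = (p * f) * e := by ring
        rw [this] at h2
        exact h2
      rw [Nat.mul_mod_mul_left, Nat.mul_mod_mul_left] at h3
      have hpf : 0 < p * f := Nat.mul_pos hp.pos hfpos
      have h4 := Nat.eq_of_mul_eq_mul_left hpf h3
      rwa [Nat.mod_eq_of_lt ht, Nat.mod_eq_of_lt ht'] at h4
  -- relate pDp sums to V
  have hT : ∀ j : ℕ, ∑ t ∈ pDp p e f g j, β ^ t = V j := by
    intro j
    have hmemlt : ∀ y ∈ Dp p e f g j, y < p := by
      intro y hy
      obtain ⟨t, ht, hyt⟩ := Finset.mem_image.mp hy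
      rw [← hyt]; exact Nat.mod_lt _ hp.pos
    rw [pDp, Finset.sum_image]
    · rw [Dp, Finset.sum_image]
      · simp only [hV]
        apply Finset.sum_congr rfl
        intro t ht
        have hlt : p * (g ^ (f * t + j) % p) < p ^ 2 := by
          calc p * (g ^ (f * t + j) % p) < p * p :=
            (Nat.mul_lt_mul_left hp.pos).mpr (Nat.mod_lt _ hp.pos)
            _ = p ^ 2 := (sq p).symm
        rw [Nat.mod_eq_of_lt hlt]
      · intro t ht t' ht' hEq
        simp only [Finset.coe_range, Set.mem_Iio] at ht ht'
        beta_reduce at hEq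
        rw [hiffp] at hEq
        have hEq' : f * t + j ≡ f * t' + j [MOD e * f] := hEq
        have h2 := hEq'.add_right_cancel' j
        have h3 : f * t % (f * e) = f * t' % (f * e) := by
          have : e * f = f * e := by ring
          rw [this] at h2; exact h2
        rw [Nat.mul_mod_mul_left, Nat.mul_mod_mul_left] at h3
        have h4 := Nat.eq_of_mul_eq_mul_left hfpos h3
        rwa [Nat.mod_eq_of_lt ht, Nat.mod_eq_of_lt ht'] at h4
    · intro y hy y' hy' hEq
      have h1 : p * y < p ^ 2 := by
        calc p * y < p * p := (Nat.mul_lt_mul_left hp.pos).mpr (hmemlt y hy)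
          _ = p ^ 2 := (sq p).symm
      have h1' : p * y' < p ^ 2 := by
        calc p * y' < p * p := (Nat.mul_lt_mul_left hp.pos).mpr (hmemlt y' hy')
          _ = p ^ 2 := (sq p).symm
      beta_reduce at hEq
      rw [Nat.mod_eq_of_lt h1, Nat.mod_eq_of_lt h1'] at hEq
      exact Nat.eq_of_mul_eq_mul_left hp.pos hEq
  -- the full-cycle sum is 1
  have hγ : (β ^ p) ^ p = 1 := by rw [← pow_mul, ← sq]; exact hβ1
  have hγ1 : β ^ p ≠ 1 := by
    intro h
    have hd := orderOf_dvd_of_pow_eq_one h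
    rw [hβ] at hd
    have := Nat.le_of_dvd hp.pos hd
    nlinarith [sq_nonneg p]
  have hgeo : ∑ x ∈ Finset.range p, (β ^ p) ^ x = 0 := by
    rw [geom_sum_eq hγ1, hγ]
    simp
  have hIco : ∑ x ∈ Finset.Ico 1 p, (β ^ p) ^ x = 1 := by
    have h0 : ∑ x ∈ Finset.range p, (β ^ p) ^ x =
        (β ^ p) ^ 0 + ∑ x ∈ Finset.Ico 1 p, (β ^ p) ^ x := by
      rw [Finset.range_eq_Ico]
      exact Finset.sum_eq_sum_Ico_succ_bot hp.pos _
    rw [hgeo, pow_zero] at h0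
    have : ∑ x ∈ Finset.Ico 1 p, (β ^ p) ^ x = -1 := by linear_combination -h0
    rw [this, CharTwo.neg_eq]
  have himg : (Finset.range (e * f)).image (fun E => g ^ E % p) = Finset.Ico 1 p := by
    apply Finset.eq_of_subset_of_card_le
    · intro x hx
      obtain ⟨E, hE, hxE⟩ := Finset.mem_image.mp hx
      refine Finset.mem_Ico.mpr ⟨?_, by rw [← hxE]; exact Nat.mod_lt _ hp.pos⟩
      rcases Nat.eq_zero_or_pos x with h0 | h1
      · exfalso
        have hdvd : p ∣ g ^ E := Nat.dvd_of_mod_eq_zero (by rw [hxE, h0])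
        have : ((g ^ E : ℕ) : ZMod p) = 0 := (ZMod.natCast_eq_zero_iff _ _).mpr hdvd
        push_cast at this
        exact (hup.pow E).ne_zero this
      · exact h1
    · rw [Nat.card_Ico, Finset.card_image_of_injOn, Finset.card_range]
      · omega
      · intro E hE E' hE' h
        simp only [Finset.coe_range, Set.mem_Iio] at hE hE'
        rw [hiffp] at h
        rwa [Nat.mod_eq_of_lt hE, Nat.mod_eq_of_lt hE'] at h
  have hgrid : ∀ n : ℕ, ∑ E ∈ Finset.range (f * n), F E =
      ∑ t ∈ Finset.range n, ∑ i ∈ Finset.range f, F (f * t + i) := by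
    intro n
    induction n with
    | zero => simp
    | succ n ih => rw [Nat.mul_succ, Finset.sum_range_add, ih, Finset.sum_range_succ]
  have hinj : ∀ E ∈ Finset.range (e * f), ∀ E' ∈ Finset.range (e * f),
      g ^ E % p = g ^ E' % p → E = E' := by
    intro E hE E' hE' h
    rw [Finset.mem_range] at hE hE'
    rw [hiffp] at h
    rwa [Nat.mod_eq_of_lt hE, Nat.mod_eq_of_lt hE'] at h
  have hW : ∑ i ∈ Finset.range f, V i = 1 := by
    calc ∑ i ∈ Finset.range f, V i
        = ∑ t ∈ Finset.range e, ∑ i ∈ Finset.range f, F (f * t + i) := by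
          simp only [hV]; exact Finset.sum_comm
      _ = ∑ E ∈ Finset.range (f * e), F E := (hgrid e).symm
      _ = ∑ E ∈ Finset.range (e * f), F E := by rw [mul_comm f e]
      _ = ∑ x ∈ (Finset.range (e * f)).image (fun E => g ^ E % p), β ^ (p * x) := by
          rw [Finset.sum_image hinj]
      _ = ∑ x ∈ Finset.Ico 1 p, β ^ (p * x) := by rw [himg]
      _ = ∑ x ∈ Finset.Ico 1 p, (β ^ p) ^ x :=
          Finset.sum_congr rfl fun x _ => by rw [pow_mul]
      _ = 1 := hIco
  have hWx : ∀ x : ℕ, ∑ i ∈ Finset.range f, V (i + x) = 1 := by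
    intro x
    calc ∑ i ∈ Finset.range f, V (i + x)
        = ∑ i ∈ Finset.range f, V ((i + x) % f) :=
          Finset.sum_congr rfl fun i _ => hVcong _ _ (Nat.mod_mod_of_dvd _ dvd_rfl).symm
      _ = ∑ i ∈ Finset.range f, V i := sum_range_shift f hfpos x V
      _ = 1 := hW
  have hblocks : ∀ (x n : ℕ), ∑ i ∈ Finset.range (f * n), V (i + x) = (n : K) := by
    intro x n
    induction n with
    | zero => simp
    | succ n ih =>
      rw [Nat.mul_succ, Finset.sum_range_add, ih]
      have : ∑ i ∈ Finset.range f, V (f * n + i + x) = 1 := by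
        rw [show (∑ i ∈ Finset.range f, V (f * n + i + x)) =
          ∑ i ∈ Finset.range f, V (i + (x + f * n)) from
          Finset.sum_congr rfl fun i _ => by ring_nf]
        exact hWx (x + f * n)
      rw [this]
      push_cast
      ring
  -- disjointness for Hp2
  have hdisj2 : (↑(Finset.range (p * f / 2)) : Set ℕ).PairwiseDisjoint
      (fun i => Dp2 p e f g ((i + b) % (p * f))) := by
    intro i hi i' hi' hne
    simp only [Finset.coe_range, Set.mem_Iio] at hi hi'
    refine Finset.disjoint_left.mpr fun x hx hx' => hne ?_
    obtain ⟨t, ht, hxt⟩ := Finset.mem_image.mp hx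
    obtain ⟨t', ht', hxt'⟩ := Finset.mem_image.mp hx'
    have h := hxt.trans hxt'.symm
    rw [hiff2] at h
    have h' : p * f * t + (i + b) % (p * f) ≡ p * f * t' + (i' + b) % (p * f)
        [MOD p * f] := by
      refine Nat.ModEq.of_dvd ⟨e, by ring⟩ h
    have h2 : ((i + b) % (p * f)) % (p * f) = ((i' + b) % (p * f)) % (p * f) := by
      have := h'
      rwa [Nat.ModEq, Nat.mul_add_mod, Nat.mul_add_mod] at this
    rw [Nat.mod_mod_of_dvd _ dvd_rfl, Nat.mod_mod_of_dvd _ dvd_rfl] at h2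
    have h3 : i ≡ i' [MOD p * f] := Nat.ModEq.add_right_cancel' b h2
    have hlt : p * f / 2 ≤ p * f := Nat.div_le_self _ _
    have := h3
    rwa [Nat.ModEq, Nat.mod_eq_of_lt (by omega), Nat.mod_eq_of_lt (by omega)] at this
  -- disjointness for Hp
  have hdisj1 : ∀ b' : ℕ, (↑(Finset.range (f / 2)) : Set ℕ).PairwiseDisjoint
      (fun i => pDp p e f g ((i + b') % f)) := by
    intro b' i hi i' hi' hne
    simp only [Finset.coe_range, Set.mem_Iio] at hi hi'
    refine Finset.disjoint_left.mpr fun x hx hx' => hne ?_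
    obtain ⟨y, hy, hxy⟩ := Finset.mem_image.mp hx
    obtain ⟨y', hy', hxy'⟩ := Finset.mem_image.mp hx'
    obtain ⟨t, ht, hyt⟩ := Finset.mem_image.mp hy
    obtain ⟨t', ht', hyt'⟩ := Finset.mem_image.mp hy'
    have hylt : y < p := by rw [← hyt]; exact Nat.mod_lt _ hp.pos
    have hylt' : y' < p := by rw [← hyt']; exact Nat.mod_lt _ hp.pos
    have hpy : p * y % p ^ 2 = p * y := Nat.mod_eq_of_lt (by
      calc p * y < p * p := (Nat.mul_lt_mul_left hp.pos).mpr hylt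
        _ = p ^ 2 := (sq p).symm)
    have hpy' : p * y' % p ^ 2 = p * y' := Nat.mod_eq_of_lt (by
      calc p * y' < p * p := (Nat.mul_lt_mul_left hp.pos).mpr hylt'
        _ = p ^ 2 := (sq p).symm)
    have hyy : y = y' := by
      have := hxy.trans hxy'.symm
      rw [hpy, hpy'] at this
      exact Nat.eq_of_mul_eq_mul_left hp.pos this
    have h := hyt.trans (hyy ▸ hyt'.symm)
    rw [hiffp] at h
    have h' : f * t + (i + b') % f ≡ f * t' + (i' + b') % f [MOD f] :=
      Nat.ModEq.of_dvd ⟨e, by ring⟩ h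
    have h2 : ((i + b') % f) % f = ((i' + b') % f) % f := by
      have := h'
      rwa [Nat.ModEq, Nat.mul_add_mod, Nat.mul_add_mod] at this
    rw [Nat.mod_mod_of_dvd _ dvd_rfl, Nat.mod_mod_of_dvd _ dvd_rfl] at h2
    have h3 : i ≡ i' [MOD f] := Nat.ModEq.add_right_cancel' b' h2
    have hlt : f / 2 < f := Nat.div_lt_self hfpos one_lt_two
    have := h3
    rwa [Nat.ModEq, Nat.mod_eq_of_lt (by omega), Nat.mod_eq_of_lt (by omega)] at this
  -- split of p*f/2
  obtain ⟨c, hc⟩ := hodd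
  obtain ⟨f2, hf2⟩ : 2 ∣ f := by rw [hf]; exact dvd_pow_self 2 (by omega)
  have hsplit : p * f / 2 = f * ((p - 1) / 2) + f / 2 := by
    have h1 : p * f = 2 * (f * c + f2) := by rw [hc, hf2]; ring
    have h2 : (p - 1) / 2 = c := by omega
    have h3 : f / 2 = f2 := by omega
    rw [h1, Nat.mul_div_cancel_left _ (by norm_num : 0 < 2), h2, h3]
  -- main computation: LHS
  have hLHS : ∑ t ∈ Hp2 p e f g b, β ^ (a * t) =
      ∑ i ∈ Finset.range (p * f / 2), V (i + (b + k)) := by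
    rw [Hp2, Finset.sum_biUnion hdisj2]
    apply Finset.sum_congr rfl
    intro i _
    rw [hS2]
    apply hVcong
    have hmod : (i + b) % (p * f) ≡ i + b [MOD f] :=
      Nat.ModEq.of_dvd ⟨p, by ring⟩ (Nat.mod_modEq (i + b) (p * f))
    have : (i + b) % (p * f) + k + f * s ≡ i + b + k + f * s [MOD f] :=
      (hmod.add_right k).add_right (f * s)
    calc ((i + b) % (p * f) + k + f * s) % f = (i + b + k + f * s) % f := this
      _ = (i + b + k) % f := Nat.add_mul_mod_self_left _ f s
      _ = (i + (b + k)) % f := by rw [add_assoc]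
  -- main computation: RHS sum
  have hRHS : ∑ t ∈ Hp p e f g ((b + k) % f), β ^ t =
      ∑ i ∈ Finset.range (f / 2), V (i + (b + k)) := by
    rw [Hp, Finset.sum_biUnion (hdisj1 ((b + k) % f))]
    apply Finset.sum_congr rfl
    intro i _
    rw [hT]
    apply hVcong
    calc ((i + (b + k) % f) % f) % f = (i + (b + k) % f) % f :=
          Nat.mod_mod_of_dvd _ dvd_rfl
      _ = (i + (b + k)) % f := Nat.add_mod_mod _ _ _
  rw [hLHS, hRHS, hsplit, Finset.sum_range_add, hblocks (b + k) ((p - 1) / 2)]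
  congr 1
  apply Finset.sum_congr rfl
  intro i _
  apply hVcong
  have : f * ((p - 1) / 2) + i + (b + k) = (i + (b + k)) + f * ((p - 1) / 2) := by ring
  rw [this, Nat.add_mul_mod_self_left]
end

section
/- For every a ∈ Z_{p²} and every k with 0 ≤ k ≤ pf−1, the value S(β^a) = Σ_{i=0}^{p²−1} s_i·β^{a·i} is given by: S(β^a) = 1 if a = 0; S(β^a) = 1 + H_{(b+k) mod f}^{(p)}(β) if a ∈ p·D_k^{(p)}; and S(β^a) = 1 + H_{(b+k) mod f}^{(p)}(β) + H_{(b+k) mod pf}^{(p²)}(β) if a ∈ D_k^{(p²)}. -/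
open Finset Polynomial

/-- The value `S(x) = Σ_{i=0}^{p²-1} s_i x^i` in `K`, where `s_i = 1` iff `i mod p² ∈ C₁`. -/
def Sval (p e f g b : ℕ) {K : Type*} [Field K] (x : K) : K :=
  ∑ i ∈ Finset.range (p ^ 2), if i % p ^ 2 ∈ C1 p e f g b then x ^ i else 0

/- ------------------------------------------------------------------ -/
/- Auxiliary lemmas                                                    -/
/- ------------------------------------------------------------------ -/

lemma pow_one_add_of_sq_zero {R : Type*} [CommRing R] {x : R} (hx : x ^ 2 = 0) (n : ℕ) :
    (1 + x) ^ n = 1 + n * x := by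
  induction n with
  | zero => simp
  | succ n ih =>
    rw [pow_succ, ih]
    push_cast
    linear_combination (n : R) * hx

lemma unit_pow_eq_pow_iff {M : Type*} [Monoid M] {x : M} (hx : IsUnit x) {m n : ℕ} :
    x ^ m = x ^ n ↔ m ≡ n [MOD orderOf x] := by
  rcases hx with ⟨u, rfl⟩
  rw [← Units.val_pow_eq_pow_val, ← Units.val_pow_eq_pow_val]
  rw [show orderOf (u : M) = orderOf u from orderOf_units]
  exact ⟨fun h => pow_eq_pow_iff_modEq.mp (Units.ext h),
    fun h => congrArg Units.val (pow_eq_pow_iff_modEq.mpr h)⟩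

/-- shift for periodic sums -/
lemma sum_shift_period {K : Type*} [AddCommGroup K] (n : ℕ) (h : ℕ → K)
    (hh : ∀ t, h (t + n) = h t) (s : ℕ) :
    ∑ t ∈ range n, h (s + t) = ∑ t ∈ range n, h t := by
  induction s with
  | zero => simp
  | succ s ih =>
    have step : ∑ t ∈ range n, h (s + (t + 1)) = ∑ t ∈ range n, h (s + t) := by
      have h1 := Finset.sum_range_succ (fun t => h (s + t)) n
      have h2 := Finset.sum_range_succ' (fun t => h (s + t)) n
      have he : h (s + n) = h (s + 0) := by simpa using hh s
      rw [h1, he] at h2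
      exact (add_right_cancel h2.symm)
    calc ∑ t ∈ range n, h (s + 1 + t) = ∑ t ∈ range n, h (s + (t + 1)) := by
          apply Finset.sum_congr rfl; intro t _; congr 1; omega
      _ = ∑ t ∈ range n, h (s + t) := step
      _ = _ := ih

lemma sum_blocks {K : Type*} [AddCommGroup K] (n : ℕ) (h : ℕ → K)
    (hh : ∀ t, h (t + n) = h t) (q : ℕ) :
    ∑ t ∈ range (q * n), h t = q • ∑ t ∈ range n, h t := by
  induction q with
  | zero => simp
  | succ q ih =>
    have hq : (q + 1) * n = q * n + n := by ring
    rw [hq, Finset.sum_range_add, ih, succ_nsmul]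
    congr 1
    exact sum_shift_period n h hh (q * n)

lemma sum_range_mul_eq {K : Type*} [AddCommMonoid K] (h : ℕ → K) (e f : ℕ) :
    ∑ m ∈ range (e * f), h m = ∑ t ∈ range e, ∑ i ∈ range f, h (f * t + i) := by
  induction e with
  | zero => simp
  | succ e ih =>
    have hq : (e + 1) * f = e * f + f := by ring
    rw [hq, Finset.sum_range_add, ih, Finset.sum_range_succ]
    congr 1
    apply Finset.sum_congr rfl; intro i _; congr 1; ring

lemma nat_modeq_add_mul (a n k : ℕ) : a + n * k ≡ a [MOD n] := by
  simp [Nat.ModEq, Nat.add_mul_mod_self_left]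

lemma gcop {p g : ℕ} (hp : p.Prime)
    (hg : orderOf ((g : ℕ) : ZMod (p ^ 2)) = p * (p - 1)) : ¬ p ∣ g := by
  have hp0 : 0 < p := hp.pos
  have h2 : 2 ≤ p := hp.two_le
  have hgu2 : IsUnit ((g : ℕ) : ZMod (p ^ 2)) := by
    refine IsUnit.of_pow_eq_one (n := p * (p - 1)) ?_ (Nat.mul_ne_zero (by omega) (by omega))
    rw [← hg]; exact pow_orderOf_eq_one _
  have hcop : g.Coprime (p ^ 2) := (ZMod.isUnit_iff_coprime g (p ^ 2)).mp hgu2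
  have hcop1 : g.Coprime p := (Nat.coprime_pow_right_iff (by norm_num) g p).mp hcop
  intro hd
  exact (hp.coprime_iff_not_dvd.mp hcop1.symm) hd

lemma orderOf_mod_p {p g : ℕ} (hp : p.Prime)
    (hg : orderOf ((g : ℕ) : ZMod (p ^ 2)) = p * (p - 1)) :
    orderOf ((g : ℕ) : ZMod p) = p - 1 := by
  haveI : Fact p.Prime := ⟨hp⟩
  have hp0 : 0 < p := hp.pos
  have h2 : 2 ≤ p := hp.two_le
  have hgp : ¬ p ∣ g := gcop hp hg
  have hg0 : ((g : ℕ) : ZMod p) ≠ 0 := by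
    rw [Ne, ZMod.natCast_eq_zero_iff]; exact hgp
  set d := orderOf ((g : ℕ) : ZMod p) with hd
  have hdvd1 : d ∣ p - 1 :=
    orderOf_dvd_of_pow_eq_one (ZMod.pow_card_sub_one_eq_one hg0)
  have h1 : ((g : ℕ) : ZMod p) ^ d = 1 := pow_orderOf_eq_one _
  have hmod : (g ^ d) % p = 1 % p := by
    have : ((g ^ d : ℕ) : ZMod p) = ((1 : ℕ) : ZMod p) := by push_cast; simpa using h1
    exact (ZMod.natCast_eq_natCast_iff _ _ _).mp this
  have hge1 : 1 ≤ g ^ d := by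
    have : g ≠ 0 := by rintro rfl; exact hgp ⟨0, by ring⟩
    exact Nat.one_le_iff_ne_zero.mpr (pow_ne_zero _ this)
  have hdvd : p ∣ g ^ d - 1 := (Nat.modEq_iff_dvd' hge1).mp hmod.symm
  obtain ⟨c, hc⟩ := hdvd
  have hgd : g ^ d = 1 + p * c := by omega
  have hpp : ((p : ZMod (p ^ 2))) ^ 2 = 0 := by
    have : (((p ^ 2 : ℕ)) : ZMod (p ^ 2)) = 0 := ZMod.natCast_self _
    push_cast at this
    exact this
  have hx2 : ((p : ZMod (p ^ 2)) * (c : ZMod (p ^ 2))) ^ 2 = 0 := by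
    rw [mul_pow, hpp, zero_mul]
  have hpow : ((g : ℕ) : ZMod (p ^ 2)) ^ (d * p) = 1 := by
    have hgd2 : ((g : ℕ) : ZMod (p ^ 2)) ^ d = 1 + (p : ZMod (p ^ 2)) * c := by
      have : (((g ^ d : ℕ)) : ZMod (p ^ 2)) = (((1 + p * c : ℕ)) : ZMod (p ^ 2)) := by
        rw [hgd]
      push_cast at this
      simpa using this
    rw [pow_mul, hgd2, pow_one_add_of_sq_zero hx2 p]
    have hz : (p : ZMod (p ^ 2)) * ((p : ZMod (p ^ 2)) * c) = 0 := by
      have : (p : ZMod (p ^ 2)) * ((p : ZMod (p ^ 2)) * c) = ((p : ZMod (p ^ 2)) ^ 2) * c := by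
        ring
      rw [this, hpp, zero_mul]
    rw [hz, add_zero]
  have hdvd2 : p * (p - 1) ∣ d * p := by
    rw [← hg]; exact orderOf_dvd_of_pow_eq_one hpow
  have hdvd3 : p - 1 ∣ d := by
    have : p * (p - 1) ∣ p * d := by rwa [mul_comm d p] at hdvd2
    exact (Nat.mul_dvd_mul_iff_left hp0).mp this
  exact Nat.dvd_antisymm hdvd1 hdvd3

/-- The sum `Σ_{t<e} β^(p·g^(f·t+j))`, i.e. `(p·D_j^{(p)})(β)`. -/
def FDpd (p e f g : ℕ) {K : Type*} [Field K] (β : K) (j : ℕ) : K :=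
  ∑ t ∈ Finset.range e, β ^ (p * g ^ (f * t + j))

/-- The sum `Σ_{t<e} β^(g^(p·f·t+j))`, i.e. `(D_j^{(p²)})(β)`. -/
def FD2d (p e f g : ℕ) {K : Type*} [Field K] (β : K) (j : ℕ) : K :=
  ∑ t ∈ Finset.range e, β ^ (g ^ (p * f * t + j))

theorem stmt_9 (p e f r g : ℕ) (hp : p.Prime) (hodd : Odd p)
    (hr : 1 ≤ r) (hf : f = 2 ^ r) (hef : p - 1 = e * f)
    (hg : orderOf (g : ZMod (p ^ 2)) = p * (p - 1))
    {K : Type*} [Field K] (hK : CharP K 2) (β : K) (hβ : orderOf β = p ^ 2)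
    (b : ℕ) (hb : b < p * f) :
    Sval p e f g b ((β : K) ^ (0 : ℕ)) = 1 ∧
    ∀ k : ℕ, k < p * f →
      (∀ a ∈ pDp p e f g k,
        Sval p e f g b (β ^ a) = 1 + ∑ t ∈ Hp p e f g ((b + k) % f), β ^ t) ∧
      (∀ a ∈ Dp2 p e f g k,
        Sval p e f g b (β ^ a) =
          1 + (∑ t ∈ Hp p e f g ((b + k) % f), β ^ t) +
            ∑ t ∈ Hp2 p e f g ((b + k) % (p * f)), β ^ t) := by
  haveI := hK
  haveI : Fact p.Prime := ⟨hp⟩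
  have hp0 : 0 < p := hp.pos
  have hp2le : 2 ≤ p := hp.two_le
  have h2f : 2 ∣ f := by rw [hf]; exact dvd_pow_self 2 (by omega)
  have hm : f = 2 * (f / 2) := by omega
  have hfpos : 0 < f := by rw [hf]; positivity
  have hepos : 0 < e := by
    rcases Nat.eq_zero_or_pos e with h | h
    · exfalso; rw [h, zero_mul] at hef; omega
    · exact h
  have hp1eq : p - 1 = 2 * ((p - 1) / 2) := by
    rcases hodd with ⟨l, hl⟩; omega
  have hef2 : (p - 1) / 2 = e * (f / 2) := by
    have h1 : p - 1 = 2 * (e * (f / 2)) := by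
      rw [hef]
      calc e * f = e * (2 * (f / 2)) := by rw [← hm]
        _ = 2 * (e * (f / 2)) := by ring
    omega
  have hpf2 : p * f / 2 = f / 2 + (p - 1) / 2 * f := by
    have hp1 : p = 2 * ((p - 1) / 2) + 1 := by omega
    have h1 : p * f = 2 * (f / 2 + (p - 1) / 2 * f) := by
      calc p * f = (2 * ((p - 1) / 2) + 1) * f := by rw [← hp1]
        _ = 2 * ((p - 1) / 2 * f) + f := by ring
        _ = 2 * ((p - 1) / 2 * f) + 2 * (f / 2) := by rw [← hm]
        _ = 2 * (f / 2 + (p - 1) / 2 * f) := by ring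
    omega
  have hQpos : 0 < p ^ 2 := by positivity
  have h2K : (2 : K) = 0 := by exact_mod_cast CharP.cast_eq_zero K 2
  have haddself : ∀ x : K, x + x = 0 := by
    intro x; have : x + x = 2 * x := by ring
    rw [this, h2K, zero_mul]
  -- order facts
  have horder2 : orderOf ((g : ℕ) : ZMod (p ^ 2)) = e * (p * f) := by
    rw [hg, hef]; ring
  have horder1 : orderOf ((g : ℕ) : ZMod p) = e * f := by
    rw [orderOf_mod_p hp hg, hef]
  have hgp : ¬ p ∣ g := gcop hp hg
  have hgnp : ∀ n : ℕ, ¬ p ∣ g ^ n := fun n h => hgp (hp.dvd_of_dvd_pow h)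
  have hgu2 : IsUnit ((g : ℕ) : ZMod (p ^ 2)) := by
    refine IsUnit.of_pow_eq_one (n := e * (p * f)) ?_ (by positivity)
    rw [← horder2]; exact pow_orderOf_eq_one _
  have hgu1 : IsUnit ((g : ℕ) : ZMod p) := by
    refine IsUnit.of_pow_eq_one (n := e * f) ?_ (by positivity)
    rw [← horder1]; exact pow_orderOf_eq_one _
  -- β congruence helpers
  have hbe : ∀ x y : ℕ, x ≡ y [MOD p ^ 2] → β ^ x = β ^ y := by
    intro x y h
    rw [← pow_mod_orderOf β x, ← pow_mod_orderOf β y, hβ]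
    exact congrArg (β ^ ·) h
  have hcg2 : ∀ m n : ℕ, m ≡ n [MOD e * (p * f)] → β ^ (g ^ m) = β ^ (g ^ n) := by
    intro m n h
    apply hbe
    apply (ZMod.natCast_eq_natCast_iff _ _ _).mp
    push_cast
    rw [← pow_mod_orderOf ((g : ℕ) : ZMod (p ^ 2)) m,
      ← pow_mod_orderOf ((g : ℕ) : ZMod (p ^ 2)) n, horder2, h]
  have hg1cong : ∀ m n : ℕ, m ≡ n [MOD e * f] → g ^ m ≡ g ^ n [MOD p] := by
    intro m n h
    apply (ZMod.natCast_eq_natCast_iff _ _ _).mp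
    push_cast
    rw [← pow_mod_orderOf ((g : ℕ) : ZMod p) m,
      ← pow_mod_orderOf ((g : ℕ) : ZMod p) n, horder1, h]
  have hpmul : ∀ u v : ℕ, u ≡ v [MOD p] → p * u ≡ p * v [MOD p ^ 2] := by
    intro u v h
    have := Nat.ModEq.mul_left' (c := p) h
    rwa [← pow_two] at this
  have hcg1 : ∀ m n : ℕ, m ≡ n [MOD e * f] → β ^ (p * g ^ m) = β ^ (p * g ^ n) := by
    intro m n h
    exact hbe _ _ (hpmul _ _ (hg1cong m n h))
  -- FDpd / FD2d lemmas
  have hFDp_shift : ∀ s j : ℕ,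
      ∑ t ∈ range e, β ^ (p * g ^ (f * (s + t) + j)) = FDpd p e f g β j := by
    intro s j
    have hh : ∀ t, β ^ (p * g ^ (f * (t + e) + j)) = β ^ (p * g ^ (f * t + j)) := by
      intro t
      apply hcg1
      have hE : f * (t + e) + j = (f * t + j) + (e * f) * 1 := by ring
      rw [hE]
      exact nat_modeq_add_mul _ _ _
    exact sum_shift_period e (fun t => β ^ (p * g ^ (f * t + j))) hh s
  have hFD2_shift : ∀ s j : ℕ,
      ∑ t ∈ range e, β ^ (g ^ (p * f * (s + t) + j)) = FD2d p e f g β j := by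
    intro s j
    have hh : ∀ t, β ^ (g ^ (p * f * (t + e) + j)) = β ^ (g ^ (p * f * t + j)) := by
      intro t
      apply hcg2
      have hE : p * f * (t + e) + j = (p * f * t + j) + (e * (p * f)) * 1 := by ring
      rw [hE]
      exact nat_modeq_add_mul _ _ _
    exact sum_shift_period e (fun t => β ^ (g ^ (p * f * t + j))) hh s
  have hFDp_mod : ∀ j : ℕ, FDpd p e f g β j = FDpd p e f g β (j % f) := by
    intro j
    have key : ∀ t : ℕ, f * t + j = f * (j / f + t) + j % f := by
      intro t
      have h := Nat.div_add_mod j f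
      calc f * t + j = f * t + (f * (j / f) + j % f) := by rw [h]
        _ = f * (j / f + t) + j % f := by ring
    calc FDpd p e f g β j = ∑ t ∈ range e, β ^ (p * g ^ (f * (j / f + t) + j % f)) := by
          apply Finset.sum_congr rfl; intro t _; rw [← key t]
      _ = FDpd p e f g β (j % f) := hFDp_shift _ _
  have hFD2_mod : ∀ j : ℕ, FD2d p e f g β j = FD2d p e f g β (j % (p * f)) := by
    intro j
    have key : ∀ t : ℕ, p * f * t + j = p * f * (j / (p * f) + t) + j % (p * f) := by
      intro t
      have h := Nat.div_add_mod j (p * f)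
      calc p * f * t + j = p * f * t + (p * f * (j / (p * f)) + j % (p * f)) := by rw [h]
        _ = p * f * (j / (p * f) + t) + j % (p * f) := by ring
    calc FD2d p e f g β j
        = ∑ t ∈ range e, β ^ (g ^ (p * f * (j / (p * f) + t) + j % (p * f))) := by
          apply Finset.sum_congr rfl; intro t _; rw [← key t]
      _ = FD2d p e f g β (j % (p * f)) := hFD2_shift _ _
  have hFDp_congr : ∀ j j' : ℕ, j ≡ j' [MOD f] → FDpd p e f g β j = FDpd p e f g β j' := by
    intro j j' h
    rw [hFDp_mod j, hFDp_mod j', h]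
  have hFD2_congr : ∀ j j' : ℕ, j ≡ j' [MOD p * f] →
      FD2d p e f g β j = FD2d p e f g β j' := by
    intro j j' h
    rw [hFD2_mod j, hFD2_mod j', h]
  -- exponent extraction lemmas
  have hltp2 : ∀ M : ℕ, p * (g ^ M % p) < p ^ 2 := by
    intro M
    have hA := Nat.mod_lt (g ^ M) hp0
    calc p * (g ^ M % p) < p * p := mul_lt_mul_of_pos_left hA hp0
      _ = p ^ 2 := (pow_two p).symm
  have key1 : ∀ t j t' j' : ℕ,
      p * (g ^ (f * t + j) % p) % p ^ 2 = p * (g ^ (f * t' + j') % p) % p ^ 2 →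
      f * t + j ≡ f * t' + j' [MOD e * f] := by
    intro t j t' j' h
    rw [Nat.mod_eq_of_lt (hltp2 _), Nat.mod_eq_of_lt (hltp2 _)] at h
    have h2 : g ^ (f * t + j) % p = g ^ (f * t' + j') % p :=
      Nat.eq_of_mul_eq_mul_left hp0 h
    have h3 : ((g : ℕ) : ZMod p) ^ (f * t + j) = ((g : ℕ) : ZMod p) ^ (f * t' + j') := by
      have := (ZMod.natCast_eq_natCast_iff (g ^ (f * t + j)) (g ^ (f * t' + j')) p).mpr h2
      push_cast at this; exact this
    have := (unit_pow_eq_pow_iff hgu1).mp h3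
    rwa [horder1] at this
  have key2 : ∀ t j t' j' : ℕ,
      g ^ (p * f * t + j) % p ^ 2 = g ^ (p * f * t' + j') % p ^ 2 →
      p * f * t + j ≡ p * f * t' + j' [MOD e * (p * f)] := by
    intro t j t' j' h
    have h3 : ((g : ℕ) : ZMod (p ^ 2)) ^ (p * f * t + j)
        = ((g : ℕ) : ZMod (p ^ 2)) ^ (p * f * t' + j') := by
      have := (ZMod.natCast_eq_natCast_iff (g ^ (p * f * t + j))
        (g ^ (p * f * t' + j')) (p ^ 2)).mpr h
      push_cast at this; exact this
    have := (unit_pow_eq_pow_iff hgu2).mp h3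
    rwa [horder2] at this
  -- injectivity
  have hinj1 : ∀ j : ℕ, ∀ x ∈ range e, ∀ y ∈ range e,
      p * (g ^ (f * x + j) % p) % p ^ 2 = p * (g ^ (f * y + j) % p) % p ^ 2 → x = y := by
    intro j x hx y hy h
    have h1 := key1 x j y j h
    have h2 : f * x ≡ f * y [MOD e * f] := Nat.ModEq.add_right_cancel' j h1
    have h3 : f * x ≡ f * y [MOD f * e] := by rwa [mul_comm e f] at h2
    have h4 : x ≡ y [MOD e] := Nat.ModEq.mul_left_cancel' (by omega) h3
    have hxe := mem_range.mp hx
    have hye := mem_range.mp hy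
    have := h4
    unfold Nat.ModEq at this
    rw [Nat.mod_eq_of_lt hxe, Nat.mod_eq_of_lt hye] at this
    exact this
  have hinj2 : ∀ j : ℕ, ∀ x ∈ range e, ∀ y ∈ range e,
      g ^ (p * f * x + j) % p ^ 2 = g ^ (p * f * y + j) % p ^ 2 → x = y := by
    intro j x hx y hy h
    have h1 := key2 x j y j h
    have h2 : p * f * x ≡ p * f * y [MOD e * (p * f)] := Nat.ModEq.add_right_cancel' j h1
    have h3 : (p * f) * x ≡ (p * f) * y [MOD (p * f) * e] := by
      rwa [mul_comm e (p * f)] at h2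
    have h4 : x ≡ y [MOD e] := Nat.ModEq.mul_left_cancel' (by positivity) h3
    have hxe := mem_range.mp hx
    have hye := mem_range.mp hy
    unfold Nat.ModEq at h4
    rw [Nat.mod_eq_of_lt hxe, Nat.mod_eq_of_lt hye] at h4
    exact h4
  -- sums over classes
  have sum_pDp : ∀ a j : ℕ, (∑ x ∈ pDp p e f g j, β ^ (a * x))
      = ∑ t ∈ range e, β ^ (a * (p * g ^ (f * t + j))) := by
    intro a j
    simp only [pDp, Dp, Finset.image_image, Function.comp_def]
    rw [Finset.sum_image (hinj1 j)]
    apply Finset.sum_congr rfl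
    intro t _
    apply hbe
    apply Nat.ModEq.mul_left a
    calc p * (g ^ (f * t + j) % p) % p ^ 2
        ≡ p * (g ^ (f * t + j) % p) [MOD p ^ 2] := Nat.mod_modEq _ _
      _ ≡ p * g ^ (f * t + j) [MOD p ^ 2] := hpmul _ _ (Nat.mod_modEq _ _)
  have sum_Dp2 : ∀ a j : ℕ, (∑ x ∈ Dp2 p e f g j, β ^ (a * x))
      = ∑ t ∈ range e, β ^ (a * g ^ (p * f * t + j)) := by
    intro a j
    simp only [Dp2]
    rw [Finset.sum_image (hinj2 j)]
    apply Finset.sum_congr rfl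
    intro t _
    apply hbe
    exact Nat.ModEq.mul_left a (Nat.mod_modEq _ _)
  -- disjointness of biUnions
  have hdisjHp : ∀ b' : ℕ, Set.PairwiseDisjoint ↑(range (f / 2))
      (fun i => pDp p e f g ((i + b') % f)) := by
    intro b' i hi i' hi' hne
    simp only [Finset.coe_range, Set.mem_Iio] at hi hi'
    refine Finset.disjoint_left.mpr ?_
    intro x hx hx'
    simp only [pDp, Dp, Finset.image_image, Finset.mem_image, Finset.mem_range,
      Function.comp] at hx hx'
    obtain ⟨t, ht, hxt⟩ := hx
    obtain ⟨t', ht', hxt'⟩ := hx'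
    have h1 := key1 t ((i + b') % f) t' ((i' + b') % f) (hxt.trans hxt'.symm)
    have h2 : f * t + (i + b') % f ≡ f * t' + (i' + b') % f [MOD f] :=
      Nat.ModEq.of_dvd (dvd_mul_left f e) h1
    have h3 : (i + b') % f = (i' + b') % f := by
      have e1 : (f * t + (i + b') % f) % f = (i + b') % f := by
        rw [Nat.mul_add_mod]; exact Nat.mod_eq_of_lt (Nat.mod_lt _ hfpos)
      have e2 : (f * t' + (i' + b') % f) % f = (i' + b') % f := by
        rw [Nat.mul_add_mod]; exact Nat.mod_eq_of_lt (Nat.mod_lt _ hfpos)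
      unfold Nat.ModEq at h2
      rw [e1, e2] at h2
      exact h2
    have h4 : i ≡ i' [MOD f] := by
      have : i + b' ≡ i' + b' [MOD f] :=
        ((Nat.mod_modEq (i + b') f).symm.trans (by rw [h3])).trans (Nat.mod_modEq (i' + b') f)
      exact Nat.ModEq.add_right_cancel' b' this
    have hif : i < f := by omega
    have hif' : i' < f := by omega
    unfold Nat.ModEq at h4
    rw [Nat.mod_eq_of_lt hif, Nat.mod_eq_of_lt hif'] at h4
    exact hne h4
  have hdisjHp2 : ∀ b' : ℕ, Set.PairwiseDisjoint ↑(range (p * f / 2))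
      (fun i => Dp2 p e f g ((i + b') % (p * f))) := by
    intro b' i hi i' hi' hne
    simp only [Finset.coe_range, Set.mem_Iio] at hi hi'
    refine Finset.disjoint_left.mpr ?_
    intro x hx hx'
    simp only [Dp2, Finset.mem_image, Finset.mem_range] at hx hx'
    obtain ⟨t, ht, hxt⟩ := hx
    obtain ⟨t', ht', hxt'⟩ := hx'
    have hpfpos : 0 < p * f := by positivity
    have h1 := key2 t ((i + b') % (p * f)) t' ((i' + b') % (p * f)) (hxt.trans hxt'.symm)
    have h2 : p * f * t + (i + b') % (p * f) ≡ p * f * t' + (i' + b') % (p * f)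
        [MOD p * f] := Nat.ModEq.of_dvd (dvd_mul_left (p * f) e) h1
    have h3 : (i + b') % (p * f) = (i' + b') % (p * f) := by
      have e1 : (p * f * t + (i + b') % (p * f)) % (p * f) = (i + b') % (p * f) := by
        rw [Nat.mul_add_mod]; exact Nat.mod_eq_of_lt (Nat.mod_lt _ hpfpos)
      have e2 : (p * f * t' + (i' + b') % (p * f)) % (p * f) = (i' + b') % (p * f) := by
        rw [Nat.mul_add_mod]; exact Nat.mod_eq_of_lt (Nat.mod_lt _ hpfpos)
      unfold Nat.ModEq at h2
      rw [e1, e2] at h2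
      exact h2
    have h4 : i ≡ i' [MOD p * f] := by
      have : i + b' ≡ i' + b' [MOD p * f] :=
        ((Nat.mod_modEq (i + b') (p * f)).symm.trans (by rw [h3])).trans
          (Nat.mod_modEq (i' + b') (p * f))
      exact Nat.ModEq.add_right_cancel' b' this
    have hif : i < p * f := by omega
    have hif' : i' < p * f := by omega
    unfold Nat.ModEq at h4
    rw [Nat.mod_eq_of_lt hif, Nat.mod_eq_of_lt hif'] at h4
    exact hne h4
  -- membership facts
  have hmemHp : ∀ b' x, x ∈ Hp p e f g b' → p ∣ x ∧ x ≠ 0 ∧ x < p ^ 2 := by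
    intro b' x hx
    simp only [Hp, Finset.mem_biUnion, pDp, Dp, Finset.image_image, Function.comp_def,
      Finset.mem_image, Finset.mem_range] at hx
    obtain ⟨i, hi, t, ht, hxt⟩ := hx
    rw [Nat.mod_eq_of_lt (hltp2 _)] at hxt
    refine ⟨?_, ?_, ?_⟩
    · rw [← hxt]; exact Dvd.intro _ rfl
    · rw [← hxt]
      intro h
      have : g ^ (f * t + (i + b') % f) % p = 0 := by
        rcases Nat.mul_eq_zero.mp h with h' | h'
        · omega
        · exact h'
      exact hgnp _ ((Nat.dvd_iff_mod_eq_zero.mpr this))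
    · rw [← hxt]; exact hltp2 _
  have hmemHp2 : ∀ b' x, x ∈ Hp2 p e f g b' → ¬ p ∣ x ∧ x < p ^ 2 := by
    intro b' x hx
    simp only [Hp2, Finset.mem_biUnion, Dp2, Finset.mem_image, Finset.mem_range] at hx
    obtain ⟨i, hi, t, ht, hxt⟩ := hx
    constructor
    · rw [← hxt]
      intro h
      have hpd : p ∣ g ^ (p * f * t + (i + b') % (p * f)) :=
        (Nat.dvd_mod_iff (dvd_pow_self p (by norm_num))).mp h
      exact hgnp _ hpd
    · rw [← hxt]; exact Nat.mod_lt _ hQpos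
  have hC1sub : C1 p e f g b ⊆ range (p ^ 2) := by
    intro x hx
    rw [Finset.mem_range]
    simp only [C1, Finset.mem_union, Finset.mem_singleton] at hx
    rcases hx with (hx | hx) | hx
    · exact (hmemHp b x hx).2.2
    · exact (hmemHp2 b x hx).2
    · omega
  have hdisj12 : Disjoint (Hp p e f g b) (Hp2 p e f g b) := by
    refine Finset.disjoint_left.mpr ?_
    intro x hx hx'
    exact (hmemHp2 b x hx').1 (hmemHp b x hx).1
  have hdisj0 : Disjoint (Hp p e f g b ∪ Hp2 p e f g b) ({0} : Finset ℕ) := by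
    rw [Finset.disjoint_singleton_right, Finset.mem_union]
    rintro (hx | hx)
    · exact (hmemHp b 0 hx).2.1 rfl
    · have h := (hmemHp2 b 0 hx).1
      exact h ⟨0, rfl⟩
  -- master decomposition of Sval
  have hSval : ∀ a : ℕ, Sval p e f g b (β ^ a)
      = (∑ x ∈ Hp p e f g b, β ^ (a * x)) + (∑ x ∈ Hp2 p e f g b, β ^ (a * x)) + 1 := by
    intro a
    rw [Sval]
    have h1 : ∀ i ∈ range (p ^ 2),
        (if i % p ^ 2 ∈ C1 p e f g b then (β ^ a) ^ i else 0)
        = if i ∈ C1 p e f g b then β ^ (a * i) else 0 := by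
      intro i hi
      rw [Nat.mod_eq_of_lt (mem_range.mp hi), ← pow_mul]
    rw [Finset.sum_congr rfl h1, Finset.sum_ite_mem, Finset.inter_eq_right.mpr hC1sub]
    show ∑ x ∈ Hp p e f g b ∪ Hp2 p e f g b ∪ {0}, β ^ (a * x) = _
    rw [Finset.sum_union hdisj0, Finset.sum_union hdisj12, Finset.sum_singleton,
      mul_zero, pow_zero]
  -- expansion of the H-sums
  have sum_Hp : ∀ a b' : ℕ, (∑ x ∈ Hp p e f g b', β ^ (a * x))
      = ∑ i ∈ range (f / 2), ∑ t ∈ range e, β ^ (a * (p * g ^ (f * t + (i + b') % f))) := by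
    intro a b'
    show ∑ x ∈ (range (f / 2)).biUnion (fun i => pDp p e f g ((i + b') % f)), β ^ (a * x) = _
    rw [Finset.sum_biUnion (hdisjHp b')]
    exact Finset.sum_congr rfl fun i _ => sum_pDp a ((i + b') % f)
  have sum_Hp2 : ∀ a b' : ℕ, (∑ x ∈ Hp2 p e f g b', β ^ (a * x))
      = ∑ i ∈ range (p * f / 2), ∑ t ∈ range e,
          β ^ (a * g ^ (p * f * t + (i + b') % (p * f))) := by
    intro a b'
    show ∑ x ∈ (range (p * f / 2)).biUnion
      (fun i => Dp2 p e f g ((i + b') % (p * f))), β ^ (a * x) = _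
    rw [Finset.sum_biUnion (hdisjHp2 b')]
    exact Finset.sum_congr rfl fun i _ => sum_Dp2 a ((i + b') % (p * f))
  -- the full sum over all classes equals 1
  have hinj3 : ∀ x ∈ range (e * f), ∀ y ∈ range (e * f), g ^ x % p = g ^ y % p → x = y := by
    intro x hx y hy h
    have h3 : ((g : ℕ) : ZMod p) ^ x = ((g : ℕ) : ZMod p) ^ y := by
      have := (ZMod.natCast_eq_natCast_iff (g ^ x) (g ^ y) p).mpr h
      push_cast at this; exact this
    have h4 := (unit_pow_eq_pow_iff hgu1).mp h3
    rw [horder1] at h4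
    unfold Nat.ModEq at h4
    rw [Nat.mod_eq_of_lt (mem_range.mp hx), Nat.mod_eq_of_lt (mem_range.mp hy)] at h4
    exact h4
  have himg : Finset.image (fun m => g ^ m % p) (range (e * f)) = Finset.Ico 1 p := by
    apply Finset.eq_of_subset_of_card_le
    · intro x hx
      simp only [Finset.mem_image, Finset.mem_range] at hx
      obtain ⟨m, hm, rfl⟩ := hx
      rw [Finset.mem_Ico]
      refine ⟨?_, Nat.mod_lt _ hp0⟩
      rcases Nat.eq_zero_or_pos (g ^ m % p) with h | h
      · exact absurd (Nat.dvd_iff_mod_eq_zero.mpr h) (hgnp m)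
      · exact h
    · have hcard : (Finset.image (fun m => g ^ m % p) (range (e * f))).card = e * f := by
        rw [Finset.card_image_of_injOn, Finset.card_range]
        intro x hx y hy hxy
        exact hinj3 x (by simpa using hx) y (by simpa using hy) hxy
      rw [Nat.card_Ico, hcard]
      exact le_of_eq hef
  have hterm1 : ∀ m : ℕ, β ^ (p * g ^ m) = (β ^ p) ^ (g ^ m % p) := by
    intro m
    rw [← pow_mul]
    exact hbe _ _ (hpmul _ _ (Nat.mod_modEq (g ^ m) p).symm)
  have hγp : (β ^ p) ^ p = 1 := by
    rw [← pow_mul, ← pow_two, ← hβ]; exact pow_orderOf_eq_one β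
  have hγ1 : β ^ p ≠ 1 := by
    intro h
    have hdv := orderOf_dvd_of_pow_eq_one h
    rw [hβ] at hdv
    have := Nat.le_of_dvd hp0 hdv
    nlinarith
  have hIco : ∑ x ∈ Finset.Ico 1 p, (β ^ p) ^ x = 1 := by
    have hgeom : ∑ x ∈ range p, (β ^ p) ^ x = 0 := by
      rw [geom_sum_eq hγ1 p, hγp, sub_self, zero_div]
    have hsplit : ∑ x ∈ range p, (β ^ p) ^ x
        = (β ^ p) ^ 0 + ∑ x ∈ Finset.Ico 1 p, (β ^ p) ^ x := by
      rw [Finset.range_eq_Ico]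
      exact Finset.sum_eq_sum_Ico_succ_bot hp0 _
    rw [hgeom, pow_zero] at hsplit
    linear_combination (-1 : K) * hsplit - haddself 1
  have hT : ∑ i ∈ range f, FDpd p e f g β i = 1 := by
    calc ∑ i ∈ range f, FDpd p e f g β i
        = ∑ i ∈ range f, ∑ t ∈ range e, β ^ (p * g ^ (f * t + i)) := rfl
      _ = ∑ t ∈ range e, ∑ i ∈ range f, β ^ (p * g ^ (f * t + i)) := Finset.sum_comm
      _ = ∑ m ∈ range (e * f), β ^ (p * g ^ m) :=
          (sum_range_mul_eq (fun m => β ^ (p * g ^ m)) e f).symm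
      _ = ∑ m ∈ range (e * f), (β ^ p) ^ (g ^ m % p) :=
          Finset.sum_congr rfl fun m _ => hterm1 m
      _ = ∑ x ∈ Finset.image (fun m => g ^ m % p) (range (e * f)), (β ^ p) ^ x :=
          (Finset.sum_image hinj3).symm
      _ = ∑ x ∈ Finset.Ico 1 p, (β ^ p) ^ x := by rw [himg]
      _ = 1 := hIco
  -- periodicity of FDpd in steps of f, FD2d in steps of p*f
  have hFDp_per : ∀ t : ℕ, FDpd p e f g β (t + f) = FDpd p e f g β t := by
    intro t
    apply hFDp_congr
    have h1 : t + f = t + f * 1 := by ring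
    rw [h1]; exact nat_modeq_add_mul t f 1
  -- the block-sum identity
  have hA : ∀ c : ℕ, ∑ i ∈ range (p * f / 2), FDpd p e f g β (c + i)
      = (∑ i ∈ range (f / 2), FDpd p e f g β (c + i)) + (((p - 1) / 2 : ℕ) : K) := by
    intro c
    rw [hpf2, Finset.sum_range_add]
    congr 1
    have hre : ∀ i ∈ range ((p - 1) / 2 * f),
        FDpd p e f g β (c + (f / 2 + i)) = FDpd p e f g β (c + f / 2 + i) := by
      intro i _
      have : c + (f / 2 + i) = c + f / 2 + i := by ring
      rw [this]
    rw [Finset.sum_congr rfl hre]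
    have hper : ∀ t, FDpd p e f g β (c + f / 2 + (t + f))
        = FDpd p e f g β (c + f / 2 + t) := by
      intro t
      have h1 : c + f / 2 + (t + f) = (c + f / 2 + t) + f := by ring
      rw [h1]; exact hFDp_per _
    rw [sum_blocks f (fun i => FDpd p e f g β (c + f / 2 + i)) hper ((p - 1) / 2)]
    have hsh : ∑ i ∈ range f, FDpd p e f g β (c + f / 2 + i)
        = ∑ i ∈ range f, FDpd p e f g β i :=
      sum_shift_period f (FDpd p e f g β) hFDp_per (c + f / 2)
    rw [hsh, hT, nsmul_eq_mul, mul_one]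
  -- cardinalities
  have card_pDp : ∀ j, (pDp p e f g j).card = e := by
    intro j
    simp only [pDp, Dp, Finset.image_image, Function.comp_def]
    rw [Finset.card_image_of_injOn, Finset.card_range]
    intro x hx y hy hxy
    exact hinj1 j x (by simpa using hx) y (by simpa using hy) hxy
  have card_Dp2 : ∀ j, (Dp2 p e f g j).card = e := by
    intro j
    simp only [Dp2]
    rw [Finset.card_image_of_injOn, Finset.card_range]
    intro x hx y hy hxy
    exact hinj2 j x (by simpa using hx) y (by simpa using hy) hxy
  have card_Hp : (Hp p e f g b).card = f / 2 * e := by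
    show ((range (f / 2)).biUnion fun i => pDp p e f g ((i + b) % f)).card = _
    rw [Finset.card_biUnion fun x hx y hy hxy =>
      hdisjHp b (Finset.mem_coe.mpr hx) (Finset.mem_coe.mpr hy) hxy]
    rw [Finset.sum_congr rfl fun i _ => card_pDp ((i + b) % f), Finset.sum_const,
      Finset.card_range, smul_eq_mul]
  have card_Hp2 : (Hp2 p e f g b).card = p * f / 2 * e := by
    show ((range (p * f / 2)).biUnion fun i => Dp2 p e f g ((i + b) % (p * f))).card = _
    rw [Finset.card_biUnion fun x hx y hy hxy =>
      hdisjHp2 b (Finset.mem_coe.mpr hx) (Finset.mem_coe.mpr hy) hxy]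
    rw [Finset.sum_congr rfl fun i _ => card_Dp2 ((i + b) % (p * f)), Finset.sum_const,
      Finset.card_range, smul_eq_mul]
  -- case a = 0
  have case0 : Sval p e f g b ((β : K) ^ (0 : ℕ)) = 1 := by
    rw [hSval 0]
    have hHp1 : (∑ x ∈ Hp p e f g b, β ^ (0 * x)) = ((f / 2 * e : ℕ) : K) := by
      rw [Finset.sum_congr rfl fun x _ => by rw [zero_mul, pow_zero], Finset.sum_const,
        card_Hp, nsmul_eq_mul, mul_one]
    have hHp2' : (∑ x ∈ Hp2 p e f g b, β ^ (0 * x)) = ((p * f / 2 * e : ℕ) : K) := by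
      rw [Finset.sum_congr rfl fun x _ => by rw [zero_mul, pow_zero], Finset.sum_const,
        card_Hp2, nsmul_eq_mul, mul_one]
    rw [hHp1, hHp2']
    have hq2 : (p - 1) / 2 * f * e = 2 * ((p - 1) / 2 * ((p - 1) / 2)) := by
      calc (p - 1) / 2 * f * e = (p - 1) / 2 * (e * f) := by ring
        _ = (p - 1) / 2 * (p - 1) := by rw [← hef]
        _ = (p - 1) / 2 * (2 * ((p - 1) / 2)) := by rw [← hp1eq]
        _ = 2 * ((p - 1) / 2 * ((p - 1) / 2)) := by ring
    have hnat : f / 2 * e + p * f / 2 * e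
        = 2 * (f / 2 * e + (p - 1) / 2 * ((p - 1) / 2)) := by
      rw [hpf2]
      calc f / 2 * e + (f / 2 + (p - 1) / 2 * f) * e
          = f / 2 * e + f / 2 * e + (p - 1) / 2 * f * e := by ring
        _ = f / 2 * e + f / 2 * e + 2 * ((p - 1) / 2 * ((p - 1) / 2)) := by rw [hq2]
        _ = 2 * (f / 2 * e + (p - 1) / 2 * ((p - 1) / 2)) := by ring
    have hzero : ((f / 2 * e : ℕ) : K) + ((p * f / 2 * e : ℕ) : K) = 0 := by
      rw [← Nat.cast_add, hnat]
      push_cast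
      rw [h2K]; ring
    linear_combination hzero
  -- the RHS H_p sum
  have hRHS : ∀ k : ℕ, ∑ t ∈ Hp p e f g ((b + k) % f), β ^ t
      = ∑ i ∈ range (f / 2), FDpd p e f g β (b + k + i) := by
    intro k
    have h0 : ∑ t ∈ Hp p e f g ((b + k) % f), β ^ t
        = ∑ t ∈ Hp p e f g ((b + k) % f), β ^ (1 * t) := by
      apply Finset.sum_congr rfl; intro t _; rw [one_mul]
    rw [h0, sum_Hp 1 ((b + k) % f)]
    apply Finset.sum_congr rfl
    intro i _
    have h1 : ∑ t ∈ range e, β ^ (1 * (p * g ^ (f * t + (i + (b + k) % f) % f)))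
        = FDpd p e f g β ((i + (b + k) % f) % f) := by
      apply Finset.sum_congr rfl; intro t _; rw [one_mul]
    rw [h1]
    apply hFDp_congr
    calc (i + (b + k) % f) % f ≡ i + (b + k) % f [MOD f] := Nat.mod_modEq _ _
      _ ≡ i + (b + k) [MOD f] := Nat.ModEq.add_left i (Nat.mod_modEq _ _)
      _ = b + k + i := by ring
  -- the RHS H_{p²} sum
  have hRHS2 : ∀ k : ℕ, ∑ t ∈ Hp2 p e f g ((b + k) % (p * f)), β ^ t
      = ∑ i ∈ range (p * f / 2), FD2d p e f g β (b + k + i) := by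
    intro k
    have h0 : ∑ t ∈ Hp2 p e f g ((b + k) % (p * f)), β ^ t
        = ∑ t ∈ Hp2 p e f g ((b + k) % (p * f)), β ^ (1 * t) := by
      apply Finset.sum_congr rfl; intro t _; rw [one_mul]
    rw [h0, sum_Hp2 1 ((b + k) % (p * f))]
    apply Finset.sum_congr rfl
    intro i _
    have h1 : ∑ t ∈ range e,
        β ^ (1 * g ^ (p * f * t + (i + (b + k) % (p * f)) % (p * f)))
        = FD2d p e f g β ((i + (b + k) % (p * f)) % (p * f)) := by
      apply Finset.sum_congr rfl; intro t _; rw [one_mul]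
    rw [h1]
    apply hFD2_congr
    calc (i + (b + k) % (p * f)) % (p * f)
        ≡ i + (b + k) % (p * f) [MOD p * f] := Nat.mod_modEq _ _
      _ ≡ i + (b + k) [MOD p * f] := Nat.ModEq.add_left i (Nat.mod_modEq _ _)
      _ = b + k + i := by ring
  refine ⟨case0, ?_⟩
  intro k hk
  constructor
  · -- a ∈ p·D_k^{(p)}
    intro a ha
    have ha' : ∃ s, s < e ∧ p * (g ^ (f * s + k) % p) % p ^ 2 = a := by
      simpa [pDp, Dp, Finset.image_image, Function.comp_def, Finset.mem_image,
        Finset.mem_range] using ha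
    obtain ⟨s, hs, has⟩ := ha'
    have ha_mod : a ≡ p * g ^ (f * s + k) [MOD p ^ 2] := by
      rw [← has]
      calc p * (g ^ (f * s + k) % p) % p ^ 2
          ≡ p * (g ^ (f * s + k) % p) [MOD p ^ 2] := Nat.mod_modEq _ _
        _ ≡ p * g ^ (f * s + k) [MOD p ^ 2] := hpmul _ _ (Nat.mod_modEq _ _)
    rw [hSval a, sum_Hp a b, sum_Hp2 a b]
    -- the H_p part: all terms are 1
    have hT1 : ∑ i ∈ range (f / 2), ∑ t ∈ range e,
        β ^ (a * (p * g ^ (f * t + (i + b) % f))) = (((p - 1) / 2 : ℕ) : K) := by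
      have h1 : ∀ i ∈ range (f / 2), ∀ t ∈ range e,
          β ^ (a * (p * g ^ (f * t + (i + b) % f))) = 1 := by
        intro i _ t _
        have hc : a * (p * g ^ (f * t + (i + b) % f)) ≡ 0 [MOD p ^ 2] := by
          calc a * (p * g ^ (f * t + (i + b) % f))
              ≡ (p * g ^ (f * s + k)) * (p * g ^ (f * t + (i + b) % f)) [MOD p ^ 2] :=
                Nat.ModEq.mul_right _ ha_mod
            _ ≡ 0 [MOD p ^ 2] := Nat.modEq_zero_iff_dvd.mpr
                ⟨g ^ (f * s + k) * g ^ (f * t + (i + b) % f), by ring⟩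
        rw [hbe _ _ hc, pow_zero]
      rw [Finset.sum_congr rfl fun i hi => Finset.sum_congr rfl (h1 i hi)]
      have h2 : ∑ i ∈ range (f / 2), ∑ t ∈ range e, (1 : K) = ((f / 2 * e : ℕ) : K) := by
        rw [Finset.sum_const, Finset.card_range, Finset.sum_const, Finset.card_range]
        push_cast
        rw [nsmul_eq_mul, nsmul_eq_mul, mul_one]
      rw [h2]
      have h3 : f / 2 * e = (p - 1) / 2 := by rw [hef2]; ring
      rw [h3]
    -- the H_{p²} part
    have hinner2 : ∀ j : ℕ, ∑ t ∈ range e, β ^ (a * g ^ (p * f * t + j))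
        = FDpd p e f g β (k + j) := by
      intro j
      have hterm : ∀ t, β ^ (a * g ^ (p * f * t + j))
          = β ^ (p * g ^ (f * (s + t) + (k + j))) := by
        intro t
        have heq : (p * g ^ (f * s + k)) * g ^ (p * f * t + j)
            = p * g ^ (f * (s + p * t) + (k + j)) := by
          rw [show f * (s + p * t) + (k + j) = (f * s + k) + (p * f * t + j) by ring,
            pow_add]
          ring
        have h1 : a * g ^ (p * f * t + j) ≡ p * g ^ (f * (s + p * t) + (k + j))
            [MOD p ^ 2] := by
          rw [← heq]
          exact Nat.ModEq.mul_right _ ha_mod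
        have h2 : β ^ (p * g ^ (f * (s + p * t) + (k + j)))
            = β ^ (p * g ^ (f * (s + t) + (k + j))) := by
          apply hcg1
          have hp' : p = e * f + 1 := by omega
          have hE : f * (s + p * t) + (k + j)
              = (f * (s + t) + (k + j)) + (e * f) * (f * t) := by
            rw [hp']; ring
          rw [hE]; exact nat_modeq_add_mul _ _ _
        rw [hbe _ _ h1, h2]
      rw [Finset.sum_congr rfl fun t _ => hterm t]
      exact hFDp_shift s (k + j)
    have hT2 : ∑ i ∈ range (p * f / 2), ∑ t ∈ range e,
        β ^ (a * g ^ (p * f * t + (i + b) % (p * f)))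
        = ∑ i ∈ range (p * f / 2), FDpd p e f g β (b + k + i) := by
      rw [Finset.sum_congr rfl fun i _ => hinner2 ((i + b) % (p * f))]
      apply Finset.sum_congr rfl
      intro i _
      apply hFDp_congr
      calc k + (i + b) % (p * f) ≡ k + (i + b) [MOD f] :=
            Nat.ModEq.add_left k (Nat.ModEq.of_dvd (dvd_mul_left f p) (Nat.mod_modEq _ _))
        _ = b + k + i := by ring
    rw [hT1, hT2, hA (b + k), hRHS k]
    linear_combination haddself (((p - 1) / 2 : ℕ) : K)
  · -- a ∈ D_k^{(p²)}
    intro a ha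
    have ha' : ∃ s, s < e ∧ g ^ (p * f * s + k) % p ^ 2 = a := by
      simpa [Dp2, Finset.mem_image, Finset.mem_range] using ha
    obtain ⟨s, hs, has⟩ := ha'
    have ha_mod : a ≡ g ^ (p * f * s + k) [MOD p ^ 2] := by
      rw [← has]; exact Nat.mod_modEq _ _
    rw [hSval a, sum_Hp a b, sum_Hp2 a b]
    -- the H_p part
    have hinner1 : ∀ j : ℕ, ∑ t ∈ range e, β ^ (a * (p * g ^ (f * t + j)))
        = FDpd p e f g β (k + j) := by
      intro j
      have hterm : ∀ t, β ^ (a * (p * g ^ (f * t + j)))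
          = β ^ (p * g ^ (f * (s + t) + (k + j))) := by
        intro t
        have heq : g ^ (p * f * s + k) * (p * g ^ (f * t + j))
            = p * g ^ (f * (p * s + t) + (k + j)) := by
          rw [show f * (p * s + t) + (k + j) = (p * f * s + k) + (f * t + j) by ring,
            pow_add]
          ring
        have h1 : a * (p * g ^ (f * t + j)) ≡ p * g ^ (f * (p * s + t) + (k + j))
            [MOD p ^ 2] := by
          rw [← heq]
          exact Nat.ModEq.mul_right _ ha_mod
        have h2 : β ^ (p * g ^ (f * (p * s + t) + (k + j)))
            = β ^ (p * g ^ (f * (s + t) + (k + j))) := by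
          apply hcg1
          have hp' : p = e * f + 1 := by omega
          have hE : f * (p * s + t) + (k + j)
              = (f * (s + t) + (k + j)) + (e * f) * (f * s) := by
            rw [hp']; ring
          rw [hE]; exact nat_modeq_add_mul _ _ _
        rw [hbe _ _ h1, h2]
      rw [Finset.sum_congr rfl fun t _ => hterm t]
      exact hFDp_shift s (k + j)
    have hT1' : ∑ i ∈ range (f / 2), ∑ t ∈ range e,
        β ^ (a * (p * g ^ (f * t + (i + b) % f)))
        = ∑ i ∈ range (f / 2), FDpd p e f g β (b + k + i) := by
      rw [Finset.sum_congr rfl fun i _ => hinner1 ((i + b) % f)]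
      apply Finset.sum_congr rfl
      intro i _
      apply hFDp_congr
      calc k + (i + b) % f ≡ k + (i + b) [MOD f] :=
            Nat.ModEq.add_left k (Nat.mod_modEq _ _)
        _ = b + k + i := by ring
    -- the H_{p²} part
    have hinner2' : ∀ j : ℕ, ∑ t ∈ range e, β ^ (a * g ^ (p * f * t + j))
        = FD2d p e f g β (k + j) := by
      intro j
      have hterm : ∀ t, β ^ (a * g ^ (p * f * t + j))
          = β ^ (g ^ (p * f * (s + t) + (k + j))) := by
        intro t
        have heq : g ^ (p * f * s + k) * g ^ (p * f * t + j)
            = g ^ (p * f * (s + t) + (k + j)) := by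
          rw [show p * f * (s + t) + (k + j) = (p * f * s + k) + (p * f * t + j) by ring]
          exact (pow_add g (p * f * s + k) (p * f * t + j)).symm
        have h1 : a * g ^ (p * f * t + j) ≡ g ^ (p * f * (s + t) + (k + j))
            [MOD p ^ 2] := by
          rw [← heq]
          exact Nat.ModEq.mul_right _ ha_mod
        exact hbe _ _ h1
      rw [Finset.sum_congr rfl fun t _ => hterm t]
      exact hFD2_shift s (k + j)
    have hT2' : ∑ i ∈ range (p * f / 2), ∑ t ∈ range e,
        β ^ (a * g ^ (p * f * t + (i + b) % (p * f)))
        = ∑ i ∈ range (p * f / 2), FD2d p e f g β (b + k + i) := by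
      rw [Finset.sum_congr rfl fun i _ => hinner2' ((i + b) % (p * f))]
      apply Finset.sum_congr rfl
      intro i _
      apply hFD2_congr
      calc k + (i + b) % (p * f) ≡ k + (i + b) [MOD p * f] :=
            Nat.ModEq.add_left k (Nat.mod_modEq _ _)
        _ = b + k + i := by ring
    rw [hT1', hT2', hRHS k, hRHS2 k]
    ring
end
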